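/- arXiv:2109.01221 — 3 statements merged into one kernel-verified Lean document; each statement's English description precedes it below -/
import Mathlib

section
/- Let X = {x_1, ..., x_n} be a finite set of distinct integers each greater than 1, let D = {1, 0} ∪ X, and let (T,s) be a signed tree realizing D whose underlying tree has the minimum possible number of vertices among all signed trees realizing D. If uv is the unique edge of T with s(uv) = −, then deg(u) = 2 and deg(v) = 2. -/
/-- A signed tree: a finite tree (on vertex type `Fin n`) together with an
assignment of a sign to each possible edge (`true` = positive, `false` = negative). -/
structure SignedTree where
  n : ℕ
  G : SimpleGraph (Fin n)
  adjDec : DecidableRel G.Adj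
  isTree : G.IsTree
  sgn : Sym2 (Fin n) → Bool

namespace SignedTree

/-- The (unsigned) degree of a vertex in the underlying tree. -/
def deg (T : SignedTree) (v : Fin T.n) : ℕ :=
  letI := T.adjDec
  T.G.degree v

/-- The signed degree of a vertex: the number of positive edges incident to it
minus the number of negative edges incident to it. -/
def sdeg (T : SignedTree) (v : Fin T.n) : ℤ :=
  letI := T.adjDec
  ((((T.G.neighborFinset v).filter fun w => T.sgn s(v, w) = true).card : ℤ)) -
  ((((T.G.neighborFinset v).filter fun w => T.sgn s(v, w) = false).card : ℤ))

/-- The signed tree `T` realizes the set `D` if `D` is exactly the set of signed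
degrees of the vertices of `T`. -/
def Realizes (T : SignedTree) (D : Set ℤ) : Prop :=
  D = Set.range T.sdeg

end SignedTree

/-- `diamOfSet D` is the minimum diameter of the underlying tree over all
signed trees realizing `D`. -/
noncomputable def diamOfSet (D : Set ℤ) : ℕ :=
  sInf {k : ℕ | ∃ T : SignedTree, T.Realizes D ∧ T.G.diam = k}

/-- `orderOfSet D` is the minimum number of vertices of the underlying tree over
all signed trees realizing `D`. -/
noncomputable def orderOfSet (D : Set ℤ) : ℕ :=
  sInf {k : ℕ | ∃ T : SignedTree, T.Realizes D ∧ T.n = k}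



open Finset

lemma first_edge_mem {V : Type*} {G : SimpleGraph V} {u w : V} (q : G.Walk u w)
    (h : ¬ q.Nil) : s(u, q.getVert 1) ∈ q.edges := by
  cases q with
  | nil => simp at h
  | cons hadj q' =>
    rw [SimpleGraph.Walk.getVert_cons_succ, SimpleGraph.Walk.getVert_zero, SimpleGraph.Walk.edges_cons]
    exact List.mem_cons_self

section ParentGraph

variable {N : ℕ} [NeZero N] (p : Fin N → Fin N)

def parentGraph : SimpleGraph (Fin N) where
  Adj a b := a ≠ b ∧ (p a = b ∨ p b = a)
  symm := ⟨by rintro a b ⟨h1, h2⟩; exact ⟨h1.symm, h2.symm⟩⟩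
  loopless := ⟨by rintro a ⟨h1, _⟩; exact h1 rfl⟩

instance parentGraphDec : DecidableRel (parentGraph p).Adj :=
  fun a b => inferInstanceAs (Decidable (a ≠ b ∧ (p a = b ∨ p b = a)))

variable (hp0 : p 0 = 0) (hp : ∀ i : Fin N, i ≠ 0 → p i < i)

include hp0 hp in
lemma parentGraph_adj_iff {a b : Fin N} :
    (parentGraph p).Adj a b ↔ ((a ≠ 0 ∧ p a = b) ∨ (b ≠ 0 ∧ p b = a)) := by
  constructor
  · rintro ⟨hne, h | h⟩
    · rcases eq_or_ne a 0 with rfl | ha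
      · rw [hp0] at h; exact absurd h hne
      · exact Or.inl ⟨ha, h⟩
    · rcases eq_or_ne b 0 with rfl | hb
      · rw [hp0] at h; exact absurd h.symm hne
      · exact Or.inr ⟨hb, h⟩
  · rintro (⟨ha, h⟩ | ⟨hb, h⟩)
    · exact ⟨by subst h; exact (hp a ha).ne', Or.inl h⟩
    · exact ⟨by subst h; exact (hp b hb).ne, Or.inr h⟩

include hp in
lemma parentGraph_preconnected0 : ∀ n : ℕ, ∀ v : Fin N, v.val < n →
    (parentGraph p).Reachable v 0 := by
  intro n
  induction n with
  | zero => intro v hv; omega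
  | succ n ih =>
    intro v hv
    rcases eq_or_ne v 0 with rfl | hv0
    · exact SimpleGraph.Reachable.refl 0
    · have hlt := hp v hv0
      have hadj : (parentGraph p).Adj v (p v) := ⟨hlt.ne', Or.inl rfl⟩
      exact hadj.reachable.trans (ih (p v) (by have := (Fin.lt_def.mp hlt); omega))

include hp in
lemma parentGraph_preconnected : (parentGraph p).Preconnected := fun u v =>
  (parentGraph_preconnected0 p hp (u.val + 1) u (by omega)).trans
    (parentGraph_preconnected0 p hp (v.val + 1) v (by omega)).symm

include hp0 hp in
lemma parentGraph_isAcyclic : (parentGraph p).IsAcyclic := by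
  intro v c hc
  classical
  set F : Finset (Fin N) := c.support.toFinset with hF
  have hne : F.Nonempty := ⟨v, by simp [hF]⟩
  set m : Fin N := F.max' hne with hm
  have hmax : ∀ x ∈ c.support, x ≤ m := fun x hx => F.le_max' x (by simp [hF, hx])
  have hmem : m ∈ c.support := by
    have := F.max'_mem hne; simpa [hF] using this
  have hc1cyc : (c.rotate m hmem).IsCycle := SimpleGraph.Walk.IsCycle.rotate hmem hc
  have hsupp : ∀ x, x ∈ (c.rotate m hmem).support → x ≤ m := by
    intro x hx
    rcases (SimpleGraph.Walk.mem_support_iff _).mp hx with rfl | hx'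
    · exact le_refl _
    · have hperm := SimpleGraph.Walk.support_rotate c m hmem
      exact hmax x (List.mem_of_mem_tail (hperm.mem_iff.mp hx'))
  have hnb : ∀ w, (parentGraph p).Adj m w → w ∈ (c.rotate m hmem).support → w = p m := by
    intro w hadj hw
    rcases (parentGraph_adj_iff p hp0 hp).mp hadj with ⟨hm0, h⟩ | ⟨hw0, h⟩
    · exact h.symm
    · exfalso
      have h1 : w ≤ m := hsupp w hw
      have h2 : w ≠ m := (hadj.ne).symm
      have h3 := hp w hw0
      rw [h] at h3
      exact absurd h3 (not_lt.mpr h1)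
  revert hc1cyc hsupp hnb
  generalize c.rotate m hmem = c1
  intro hc1cyc hsupp hnb
  cases c1 with
  | nil => exact hc1cyc.ne_nil rfl
  | @cons _ b _ h q =>
    -- first edge s(m, b), b = p m
    have hbp : b = p m := hnb b h (by
      rw [SimpleGraph.Walk.support_cons]
      exact List.mem_cons_of_mem _ q.start_mem_support)
    -- last edge
    have hnn : ¬ q.reverse.Nil := SimpleGraph.Walk.not_nil_of_ne h.ne
    have hadj2 : (parentGraph p).Adj m (q.reverse.getVert 1) := q.reverse.adj_snd hnn
    have hmem2 : s(m, q.reverse.getVert 1) ∈ q.reverse.edges :=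
      first_edge_mem q.reverse hnn
    have hmem2' : s(m, q.reverse.getVert 1) ∈ q.edges := by
      rw [SimpleGraph.Walk.edges_reverse] at hmem2
      exact List.mem_reverse.mp hmem2
    have hw2supp : q.reverse.getVert 1 ∈ q.support :=
      SimpleGraph.Walk.snd_mem_support_of_mem_edges q hmem2'
    have hw2p : q.reverse.getVert 1 = p m := hnb _ hadj2 (by
      rw [SimpleGraph.Walk.support_cons]
      exact List.mem_cons_of_mem _ hw2supp)
    have htrail := hc1cyc.isCircuit.isTrail
    have hnodup := htrail.edges_nodup
    rw [SimpleGraph.Walk.edges_cons] at hnodup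
    have : s(m, b) ∉ q.edges := (List.nodup_cons.mp hnodup).1
    have hedge : s(m, b) = s(m, q.reverse.getVert 1) := Sym2.congr_right.mpr (hbp.trans hw2p.symm)
    rw [← hedge] at hmem2'
    exact this hmem2'

end ParentGraph

-- children of a vertex
def childSet {N : ℕ} [NeZero N] (p : Fin N → Fin N) (v : Fin N) : Finset (Fin N) :=
  Finset.univ.filter (fun i => i ≠ 0 ∧ p i = v)

section ParentGraph2

variable {N : ℕ} [NeZero N] (p : Fin N → Fin N)
  (hp0 : p 0 = 0) (hp : ∀ i : Fin N, i ≠ 0 → p i < i)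

include hp0 hp in
lemma parentGraph_neighborFinset_zero :
    (parentGraph p).neighborFinset 0 = childSet p 0 := by
  ext w
  rw [SimpleGraph.mem_neighborFinset, parentGraph_adj_iff p hp0 hp, childSet,
    Finset.mem_filter]
  constructor
  · rintro (⟨h0, _⟩ | ⟨hw, h⟩)
    · exact absurd rfl h0
    · exact ⟨Finset.mem_univ _, hw, h⟩
  · rintro ⟨_, hw, h⟩
    exact Or.inr ⟨hw, h⟩

include hp0 hp in
lemma parentGraph_neighborFinset_ne {v : Fin N} (hv : v ≠ 0) :
    (parentGraph p).neighborFinset v = insert (p v) (childSet p v) := by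
  ext w
  rw [SimpleGraph.mem_neighborFinset, parentGraph_adj_iff p hp0 hp, childSet,
    Finset.mem_insert, Finset.mem_filter]
  constructor
  · rintro (⟨h0, h⟩ | ⟨hw, h⟩)
    · exact Or.inl h.symm
    · exact Or.inr ⟨Finset.mem_univ _, hw, h⟩
  · rintro (rfl | ⟨_, hw, h⟩)
    · exact Or.inl ⟨hv, rfl⟩
    · exact Or.inr ⟨hw, h⟩

include hp0 hp in
lemma parentGraph_pv_not_mem_childSet {v : Fin N} (hv : v ≠ 0) : p v ∉ childSet p v := by
  rw [childSet, Finset.mem_filter]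
  rintro ⟨_, hpv0, h⟩
  have h1 := hp v hv
  have h2 := hp (p v) hpv0
  rw [h] at h2
  exact absurd (h2.trans h1) (lt_irrefl _)

include hp0 hp in
lemma parentGraph_degree_zero :
    (parentGraph p).degree 0 = (childSet p 0).card := by
  rw [← SimpleGraph.card_neighborFinset_eq_degree, parentGraph_neighborFinset_zero p hp0 hp]

include hp0 hp in
lemma parentGraph_degree_ne {v : Fin N} (hv : v ≠ 0) :
    (parentGraph p).degree v = (childSet p v).card + 1 := by
  rw [← SimpleGraph.card_neighborFinset_eq_degree, parentGraph_neighborFinset_ne p hp0 hp hv,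
    Finset.card_insert_of_notMem (parentGraph_pv_not_mem_childSet p hp0 hp hv)]

end ParentGraph2


namespace SignedTree

/-- the number of negative edges at a vertex -/
def negCard (T : SignedTree) (v : Fin T.n) : ℕ :=
  letI := T.adjDec
  ((T.G.neighborFinset v).filter fun w => T.sgn s(v, w) = false).card

/-- signed degree in terms of degree and number of negative edges -/
lemma sdeg_eq_deg_sub (T : SignedTree) (v : Fin T.n) :
    T.sdeg v = (T.deg v : ℤ) - 2 * (T.negCard v : ℤ) := by
  letI := T.adjDec
  have hsplit := Finset.card_filter_add_card_filter_not
    (s := T.G.neighborFinset v) (p := fun w => T.sgn s(v, w) = false)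
  have hne : ∀ w : Fin T.n, (¬ (T.sgn s(v, w) = false)) ↔ T.sgn s(v, w) = true := by
    intro w; simp [Bool.not_eq_false]
  rw [Finset.filter_congr (fun w _ => (hne w))] at hsplit
  unfold sdeg deg negCard
  rw [SimpleGraph.degree, ← hsplit]
  push_cast
  ring

section UniqueNeg

variable (T : SignedTree) (u v : Fin T.n) (hadj : T.G.Adj u v)
  (hneg : T.sgn s(u, v) = false)
  (huniq : ∀ e ∈ T.G.edgeSet, T.sgn e = false → e = s(u, v))

include hadj hneg huniq

/-- vertices other than `u`,`v` have all-positive incident edges -/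
lemma sdeg_eq_of_ne {w : Fin T.n} (hwu : w ≠ u) (hwv : w ≠ v) :
    T.sdeg w = (T.deg w : ℤ) := by
  letI := T.adjDec
  rw [sdeg_eq_deg_sub]
  have hfe : ((T.G.neighborFinset w).filter fun z => T.sgn s(w, z) = false) = ∅ := by
    rw [Finset.filter_eq_empty_iff]
    intro z hz
    rw [SimpleGraph.mem_neighborFinset] at hz
    intro hfz
    have := huniq s(w, z) ((SimpleGraph.mem_edgeSet T.G).mpr hz) hfz
    rw [Sym2.eq_iff] at this
    rcases this with ⟨rfl, rfl⟩ | ⟨rfl, rfl⟩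
    · exact hwu rfl
    · exact hwv rfl
  have : T.negCard w = 0 := by
    unfold negCard
    rw [hfe]
    rfl
  rw [this]
  simp

/-- the endpoint `u` of the unique negative edge -/
lemma sdeg_eq_fst : T.sdeg u = (T.deg u : ℤ) - 2 := by
  letI := T.adjDec
  rw [sdeg_eq_deg_sub]
  have hfe : ((T.G.neighborFinset u).filter fun z => T.sgn s(u, z) = false) = {v} := by
    ext z
    rw [Finset.mem_filter, SimpleGraph.mem_neighborFinset, Finset.mem_singleton]
    constructor
    · rintro ⟨hz, hfz⟩
      have := huniq s(u, z) ((SimpleGraph.mem_edgeSet T.G).mpr hz) hfz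
      rw [Sym2.eq_iff] at this
      rcases this with ⟨_, rfl⟩ | ⟨rfl, rfl⟩
      · rfl
      · exact absurd rfl hz.ne
    · rintro rfl
      exact ⟨hadj, hneg⟩
  have : T.negCard u = 1 := by
    unfold negCard
    rw [hfe]
    rfl
  rw [this]
  push_cast
  ring

end UniqueNeg

end SignedTree

namespace SignedTree

lemma deg_pos (T : SignedTree) {a b : Fin T.n} (hab : a ≠ b) (w : Fin T.n) :
    0 < T.deg w := by
  letI := T.adjDec
  have ht : ∃ t : Fin T.n, t ≠ w := by
    rcases eq_or_ne w a with rfl | h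
    · exact ⟨b, hab.symm⟩
    · exact ⟨a, h.symm⟩
  obtain ⟨t, htw⟩ := ht
  have hr : T.G.Reachable w t := T.isTree.isConnected.preconnected w t
  obtain ⟨wk⟩ := hr
  cases wk with
  | nil => exact absurd rfl htw
  | cons h q =>
    unfold deg
    rw [← SimpleGraph.card_neighborFinset_eq_degree]
    exact Finset.card_pos.mpr ⟨_, (SimpleGraph.mem_neighborFinset _ _ _).mpr h⟩

lemma lower_bound (X : Finset ℤ) (hx : ∀ x ∈ X, 1 < x)
    (D : Set ℤ) (hD : D = insert 1 (insert 0 (↑X : Set ℤ)))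
    (T : SignedTree) (hreal : T.Realizes D)
    (u v : Fin T.n) (hadj : T.G.Adj u v) (hneg : T.sgn s(u, v) = false)
    (huniq : ∀ e ∈ T.G.edgeSet, T.sgn e = false → e = s(u, v))
    (hdu : 3 ≤ T.deg u) :
    (∑ x ∈ X, x) - X.card + 5 ≤ (T.n : ℤ) := by
  classical
  letI := T.adjDec
  have huv : u ≠ v := hadj.ne
  -- swapped versions
  have hneg' : T.sgn s(v, u) = false := by rwa [Sym2.eq_swap]
  have huniq' : ∀ e ∈ T.G.edgeSet, T.sgn e = false → e = s(v, u) := by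
    intro e he hf
    rw [Sym2.eq_swap]
    exact huniq e he hf
  have hDrange : Set.range T.sdeg = insert 1 (insert 0 (↑X : Set ℤ)) := by
    rw [← hreal, hD]
  -- elements of D are nonneg
  have hDnn : ∀ z ∈ Set.range T.sdeg, 0 ≤ z := by
    rw [hDrange]
    rintro z (rfl | rfl | hz)
    · norm_num
    · norm_num
    · exact le_of_lt (lt_trans one_pos (hx z hz))
  have hu2 : T.sdeg u = (T.deg u : ℤ) - 2 := sdeg_eq_fst T u v hadj hneg huniq
  have hv2 : T.sdeg v = (T.deg v : ℤ) - 2 := sdeg_eq_fst T v u hadj.symm hneg' huniq'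
  -- all degrees positive
  have hdp : ∀ w, 0 < T.deg w := deg_pos T huv
  -- sdeg v = 0
  have h0mem : (0 : ℤ) ∈ Set.range T.sdeg := by rw [hDrange]; simp
  obtain ⟨w0, hw0⟩ := h0mem
  have hsv : T.sdeg v = 0 := by
    rcases eq_or_ne w0 u with rfl | hwu
    · rw [hu2] at hw0; omega
    · rcases eq_or_ne w0 v with rfl | hwv
      · exact hw0
      · exfalso
        rw [sdeg_eq_of_ne T u v hadj hneg huniq hwu hwv] at hw0
        have := hdp w0
        omega
  have hdv : T.deg v = 2 := by omega
  obtain ⟨d, hd⟩ : ∃ d : ℤ, T.sdeg u = d := ⟨_, rfl⟩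
  rw [hd] at hu2
  have hd1 : 1 ≤ d := by omega
  have hdmem : d ∈ insert 1 (insert 0 (↑X : Set ℤ)) := by
    rw [← hDrange]; exact ⟨u, hd⟩
  have hdmem' : d ∈ insert (1 : ℤ) X := by
    rcases hdmem with rfl | rfl | h
    · exact Finset.mem_insert_self _ _
    · omega
    · exact Finset.mem_insert_of_mem h
  have h1X : (1 : ℤ) ∉ X := fun h => absurd (hx 1 h) (by norm_num)
  -- the target finset of values
  set E : Finset ℤ := (insert (1 : ℤ) X).erase d with hE
  have hEmem : ∀ e ∈ E, e ∈ Set.range T.sdeg := by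
    intro e he
    rw [hDrange]
    rcases Finset.mem_insert.mp (Finset.mem_of_mem_erase he) with rfl | h
    · exact Or.inl rfl
    · exact Or.inr (Or.inr h)
  -- choose realizing vertices
  have hpick : ∀ e ∈ E, ∃ w : Fin T.n, T.sdeg w = e := by
    intro e he; obtain ⟨w, hw⟩ := hEmem e he; exact ⟨w, hw⟩
  choose g hg using hpick
  -- properties of chosen vertices
  have hEne0 : ∀ e ∈ E, e ≠ 0 ∧ e ≠ d := by
    intro e he
    refine ⟨?_, Finset.ne_of_mem_erase he⟩
    rcases Finset.mem_insert.mp (Finset.mem_of_mem_erase he) with rfl | h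
    · norm_num
    · have := hx e h; omega
  have hgne : ∀ e (he : e ∈ E), g e he ≠ u ∧ g e he ≠ v := by
    intro e he
    obtain ⟨he0, hed⟩ := hEne0 e he
    constructor
    · intro hgu; exact hed (by rw [← hg e he, hgu]; exact hd)
    · intro hgv; exact he0 (by rw [← hg e he, hgv, hsv])
  have hgdeg : ∀ e (he : e ∈ E), (T.deg (g e he) : ℤ) = e := by
    intro e he
    rw [← sdeg_eq_of_ne T u v hadj hneg huniq (hgne e he).1 (hgne e he).2, hg e he]
  -- the finset of special vertices
  set W : Finset (Fin T.n) := insert u (insert v (E.attach.image (fun e => g e.1 e.2))) with hW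
  have hinj : ∀ a ∈ E.attach, ∀ b ∈ E.attach,
      (fun (e : {x // x ∈ E}) => g e.1 e.2) a = (fun (e : {x // x ∈ E}) => g e.1 e.2) b →
      a = b := by
    intro a _ b _ hab
    have hab2 : g a.1 a.2 = g b.1 b.2 := hab
    have : (a.1 : ℤ) = b.1 := by rw [← hg a.1 a.2, ← hg b.1 b.2, hab2]
    exact Subtype.ext this
  have himgcard : (E.attach.image (fun e => g e.1 e.2)).card = E.card := by
    rw [Finset.card_image_of_injOn
      (fun a ha b hb hab => hinj a (by simpa using ha) b (by simpa using hb) hab),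
      Finset.card_attach]
  have huW : u ∉ insert v (E.attach.image (fun e => g e.1 e.2)) := by
    rw [Finset.mem_insert]
    rintro (rfl | h)
    · exact huv rfl
    · obtain ⟨e, _, he⟩ := Finset.mem_image.mp h
      exact (hgne e.1 e.2).1 he
  have hvW : v ∉ E.attach.image (fun e => g e.1 e.2) := by
    intro h
    obtain ⟨e, _, he⟩ := Finset.mem_image.mp h
    exact (hgne e.1 e.2).2 he
  have hWcard : W.card = E.card + 2 := by
    rw [hW, Finset.card_insert_of_notMem huW, Finset.card_insert_of_notMem hvW, himgcard]
  have hEcard : E.card = X.card := by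
    rw [hE, Finset.card_erase_of_mem hdmem', Finset.card_insert_of_notMem h1X]
    omega
  -- sum of degrees over W
  have hsumW : (∑ w ∈ W, (T.deg w : ℤ)) = (T.deg u : ℤ) + 2 + (∑ e ∈ E, e) := by
    rw [hW, Finset.sum_insert huW, Finset.sum_insert hvW, hdv,
      Finset.sum_image (fun a ha b hb hab => hinj a ha b hb hab)]
    rw [← Finset.sum_attach E (fun e => e)]
    rw [Finset.sum_congr rfl (fun e _ => hgdeg e.1 e.2)]
    push_cast
    ring
  have hsumE : (∑ e ∈ E, e) = 1 + (∑ x ∈ X, x) - d := by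
    have h1 : (∑ e ∈ E, e) + d = ∑ e ∈ insert (1:ℤ) X, e :=
      Finset.sum_erase_add _ _ hdmem'
    rw [Finset.sum_insert h1X] at h1
    linarith [h1]
  -- total sum of degrees
  have htotal : (∑ w : Fin T.n, (T.deg w : ℤ)) = 2 * ((T.n : ℤ) - 1) := by
    have h1 : ∑ w : Fin T.n, T.deg w = 2 * T.G.edgeFinset.card := by
      unfold deg
      exact SimpleGraph.sum_degrees_eq_twice_card_edges T.G
    have h2 : T.G.edgeFinset.card + 1 = Fintype.card (Fin T.n) := T.isTree.card_edgeFinset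
    rw [Fintype.card_fin] at h2
    have h1' := congrArg (Nat.cast : ℕ → ℤ) h1
    push_cast at h1'
    have h2' := congrArg (Nat.cast : ℕ → ℤ) h2
    push_cast at h2'
    linarith [h1', h2']
  -- splitting the sum
  have hWsub : W ⊆ Finset.univ := Finset.subset_univ W
  have hsplit : (∑ w ∈ Finset.univ \ W, (T.deg w : ℤ)) + (∑ w ∈ W, (T.deg w : ℤ))
      = ∑ w : Fin T.n, (T.deg w : ℤ) := Finset.sum_sdiff hWsub
  have hrest : ((Finset.univ \ W).card : ℤ) ≤ ∑ w ∈ Finset.univ \ W, (T.deg w : ℤ) := by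
    calc ((Finset.univ \ W).card : ℤ) = ∑ _w ∈ Finset.univ \ W, (1 : ℤ) := by
          rw [Finset.sum_const, nsmul_eq_mul, mul_one]
      _ ≤ ∑ w ∈ Finset.univ \ W, (T.deg w : ℤ) := by
          apply Finset.sum_le_sum
          intro w _
          have := hdp w
          omega
  have hcards : ((Finset.univ \ W).card : ℤ) = (T.n : ℤ) - (X.card + 2) := by
    rw [Finset.card_sdiff_of_subset hWsub, Finset.card_univ, Fintype.card_fin, hWcard, hEcard]
    have : X.card + 2 ≤ T.n := by
      calc X.card + 2 = W.card := by rw [hWcard, hEcard]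
        _ ≤ Finset.univ.card := Finset.card_le_card hWsub
        _ = T.n := by rw [Finset.card_univ, Fintype.card_fin]
    push_cast
    omega
  have hdu' : (T.deg u : ℤ) = d + 2 := by omega
  linarith [htotal, hsplit, hrest, hcards, hsumW, hsumE, hdu']

end SignedTree

namespace Constr

lemma card_filter_fin (N : ℕ) (P : ℕ → Prop) [DecidablePred P] :
    (Finset.univ.filter (fun i : Fin N => P i.val)).card
      = ((Finset.range N).filter P).card := by
  rw [← Finset.card_image_of_injective _ Fin.val_injective]
  congr 1
  ext j
  simp only [Finset.mem_image, Finset.mem_filter, Finset.mem_range, Finset.mem_univ, true_and]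
  constructor
  · rintro ⟨i, hP, rfl⟩; exact ⟨i.isLt, hP⟩
  · rintro ⟨hj, hP⟩; exact ⟨⟨j, hj⟩, hP, rfl⟩

variable (k : ℕ) (y : ℕ → ℕ)

def c (j : ℕ) : ℕ := y j - 2 + (if j = k - 1 then 1 else 0)

def B (j : ℕ) : ℕ := ∑ i ∈ Finset.range j, c k y i

def L : ℕ := B k y k

def NN : ℕ := 3 + k + L k y

def owner (t : ℕ) : ℕ := Nat.findGreatest (fun j => B k y j ≤ t) (k - 1)

def pN (i : ℕ) : ℕ :=
  if i ≤ 1 then 0 else if i = 2 then 1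
  else if i < 3 + k then i - 1 else 3 + owner k y (i - (3 + k))

lemma B_mono : Monotone (B k y) := fun a b hab =>
  Finset.sum_le_sum_of_subset (Finset.range_subset_range.mpr hab)

lemma B_succ (j : ℕ) : B k y (j + 1) = B k y j + c k y j := Finset.sum_range_succ _ _

lemma B_zero : B k y 0 = 0 := rfl

lemma owner_le (t : ℕ) : owner k y t ≤ k - 1 := Nat.findGreatest_le _

lemma B_owner_le (t : ℕ) : B k y (owner k y t) ≤ t := by
  have h0 : B k y 0 ≤ t := by rw [B_zero]; omega
  exact Nat.findGreatest_spec (P := fun j => B k y j ≤ t) (Nat.zero_le _) h0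

lemma lt_B_owner_succ (hk : 1 ≤ k) {t : ℕ} (ht : t < L k y) :
    t < B k y (owner k y t + 1) := by
  rcases lt_or_ge (owner k y t) (k - 1) with h | h
  · have hng : ¬ B k y (owner k y t + 1) ≤ t := by
      have := (Nat.findGreatest_eq_iff (P := fun j => B k y j ≤ t) (k := k-1)
        (m := owner k y t)).mp rfl
      exact this.2.2 (by omega) (by omega)
    omega
  · have he : owner k y t + 1 = k := by have := owner_le k y t; omega
    rw [he]
    exact ht

lemma owner_eq_iff (hk : 1 ≤ k) {t j : ℕ} (ht : t < L k y) (hj : j < k) :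
    owner k y t = j ↔ (B k y j ≤ t ∧ t < B k y (j + 1)) := by
  constructor
  · rintro rfl
    exact ⟨B_owner_le k y t, lt_B_owner_succ k y hk ht⟩
  · rintro ⟨h1, h2⟩
    have hle : j ≤ owner k y t := Nat.le_findGreatest (by omega) h1
    rcases eq_or_lt_of_le hle with h | h
    · exact h.symm
    · exfalso
      have : B k y (j + 1) ≤ B k y (owner k y t) := B_mono k y (by omega)
      have := B_owner_le k y t
      omega

lemma pN_le1 {i : ℕ} (h : i ≤ 1) : pN k y i = 0 := by unfold pN; simp [h]

lemma pN_2 : pN k y 2 = 1 := by unfold pN; norm_num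

lemma pN_spine {i : ℕ} (h3 : 3 ≤ i) (hk : i < 3 + k) : pN k y i = i - 1 := by
  unfold pN
  rw [if_neg (by omega), if_neg (by omega), if_pos hk]

lemma pN_leaf {i : ℕ} (h : 3 + k ≤ i) : pN k y i = 3 + owner k y (i - (3 + k)) := by
  unfold pN
  rw [if_neg (by omega), if_neg (by omega), if_neg (by omega)]

lemma pN_le (i : ℕ) : pN k y i ≤ i := by
  rcases le_or_gt i 1 with h | h
  · rw [pN_le1 k y h]; omega
  · rcases eq_or_ne i 2 with rfl | h2
    · rw [pN_2]; omega
    · rcases lt_or_ge i (3 + k) with h3 | h3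
      · rw [pN_spine k y (by omega) h3]; omega
      · rw [pN_leaf k y h3]
        have := owner_le k y (i - (3 + k))
        omega

lemma pN_lt (hk : 1 ≤ k) {i : ℕ} (h : 1 ≤ i) : pN k y i < i := by
  rcases le_or_gt i 1 with h1 | h1
  · rw [pN_le1 k y h1]; omega
  · rcases eq_or_ne i 2 with rfl | h2
    · rw [pN_2]; omega
    · rcases lt_or_ge i (3 + k) with h3 | h3
      · rw [pN_spine k y (by omega) h3]; omega
      · rw [pN_leaf k y h3]
        have := owner_le k y (i - (3 + k))
        omega

def pF : Fin (NN k y) → Fin (NN k y) :=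
  fun i => ⟨pN k y i.val, lt_of_le_of_lt (pN_le k y i.val) i.isLt⟩

lemma NN_pos : 0 < NN k y := by unfold NN; omega

lemma pF_zero : pF k y ⟨0, NN_pos k y⟩ = ⟨0, NN_pos k y⟩ := by
  unfold pF
  have h0 : pN k y 0 = 0 := pN_le1 k y (by omega)
  exact Fin.ext h0

lemma pF_lt (hk : 1 ≤ k) {i : Fin (NN k y)} (h : i ≠ ⟨0, NN_pos k y⟩) : pF k y i < i := by
  rw [Fin.lt_def]
  exact pN_lt k y hk (by
    have : i.val ≠ 0 := fun h0 => h (Fin.ext h0)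
    omega)

end Constr

namespace Constr

variable (k : ℕ) (y : ℕ → ℕ)

lemma pN_cases (hk : 1 ≤ k) {i : ℕ} (hi : i < NN k y) :
    (i ≤ 1 ∧ pN k y i = 0) ∨ (i = 2 ∧ pN k y i = 1) ∨
    (3 ≤ i ∧ i < 3 + k ∧ pN k y i = i - 1) ∨
    (3 + k ≤ i ∧ ∃ j, j < k ∧ pN k y i = 3 + j ∧
      B k y j ≤ i - (3 + k) ∧ i - (3 + k) < B k y (j + 1)) := by
  rcases le_or_gt i 1 with h | h
  · exact Or.inl ⟨h, pN_le1 k y h⟩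
  · rcases eq_or_ne i 2 with rfl | h2
    · exact Or.inr (Or.inl ⟨rfl, pN_2 k y⟩)
    · rcases lt_or_ge i (3 + k) with h3 | h3
      · exact Or.inr (Or.inr (Or.inl ⟨by omega, h3, pN_spine k y (by omega) h3⟩))
      · refine Or.inr (Or.inr (Or.inr ⟨h3, owner k y (i - (3 + k)), ?_, pN_leaf k y h3, ?_, ?_⟩))
        · have := owner_le k y (i - (3 + k)); omega
        · exact B_owner_le k y _
        · apply lt_B_owner_succ k y hk
          have : i - (3 + k) < L k y := by unfold NN at hi; omega
          exact this

lemma filt_zero (hk : 1 ≤ k) :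
    ((Finset.range (NN k y)).filter fun i => i ≠ 0 ∧ pN k y i = 0) = {1} := by
  ext i
  simp only [Finset.mem_filter, Finset.mem_range, Finset.mem_singleton]
  constructor
  · rintro ⟨hi, h0, hpv⟩
    rcases pN_cases k y hk hi with ⟨h, he⟩ | ⟨h, he⟩ | ⟨h, h', he⟩ | ⟨h, j, hj, he, _, _⟩ <;> omega
  · rintro rfl
    refine ⟨by unfold NN; omega, by omega, pN_le1 k y (by omega)⟩

lemma filt_one (hk : 1 ≤ k) :
    ((Finset.range (NN k y)).filter fun i => i ≠ 0 ∧ pN k y i = 1) = {2} := by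
  ext i
  simp only [Finset.mem_filter, Finset.mem_range, Finset.mem_singleton]
  constructor
  · rintro ⟨hi, h0, hpv⟩
    rcases pN_cases k y hk hi with ⟨h, he⟩ | ⟨h, he⟩ | ⟨h, h', he⟩ | ⟨h, j, hj, he, _, _⟩ <;> omega
  · rintro rfl
    refine ⟨by unfold NN; omega, by omega, pN_2 k y⟩

lemma filt_two (hk : 1 ≤ k) :
    ((Finset.range (NN k y)).filter fun i => i ≠ 0 ∧ pN k y i = 2) = {3} := by
  ext i
  simp only [Finset.mem_filter, Finset.mem_range, Finset.mem_singleton]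
  constructor
  · rintro ⟨hi, h0, hpv⟩
    rcases pN_cases k y hk hi with ⟨h, he⟩ | ⟨h, he⟩ | ⟨h, h', he⟩ | ⟨h, j, hj, he, _, _⟩ <;> omega
  · rintro rfl
    refine ⟨by unfold NN; omega, by omega, by rw [pN_spine k y (by omega) (by omega)]⟩

lemma filt_spine (hk : 1 ≤ k) {j : ℕ} (hj : j < k) :
    ((Finset.range (NN k y)).filter fun i => i ≠ 0 ∧ pN k y i = 3 + j) =
      (if j + 1 < k then ({4 + j} : Finset ℕ) else ∅) ∪
        Finset.Ico (3 + k + B k y j) (3 + k + B k y (j + 1)) := by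
  ext i
  simp only [Finset.mem_filter, Finset.mem_range, Finset.mem_union, Finset.mem_Ico]
  constructor
  · rintro ⟨hi, h0, hpv⟩
    rcases pN_cases k y hk hi with ⟨h, he⟩ | ⟨h, he⟩ | ⟨h, h', he⟩ | ⟨h, j', hj', he, hb1, hb2⟩
    · omega
    · omega
    · left
      have : i = 4 + j := by omega
      subst this
      rw [if_pos (by omega)]
      simp
    · right
      have : j' = j := by omega
      subst this
      omega
  · intro hmem
    rcases hmem with hone | hico
    · have hlt : j + 1 < k := by
        by_contra hc
        rw [if_neg hc] at hone
        exact absurd hone (Finset.notMem_empty i)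
      rw [if_pos hlt, Finset.mem_singleton] at hone
      subst hone
      refine ⟨by unfold NN; omega, by omega, ?_⟩
      rw [pN_spine k y (by omega) (by omega)]
      omega
    · have hik : 3 + k ≤ i := by omega
      have hiN : i < NN k y := by
        have h1 : B k y (j + 1) ≤ B k y k := B_mono k y (by omega)
        unfold NN L
        omega
      have howner : owner k y (i - (3 + k)) = j := by
        rw [owner_eq_iff k y hk (by unfold NN at hiN; omega) hj]
        omega
      refine ⟨hiN, by omega, ?_⟩
      rw [pN_leaf k y hik, howner]

lemma filt_leaf (hk : 1 ≤ k) {m : ℕ} (hm : 3 + k ≤ m) :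
    ((Finset.range (NN k y)).filter fun i => i ≠ 0 ∧ pN k y i = m) = ∅ := by
  ext i
  simp only [Finset.mem_filter, Finset.mem_range, Finset.notMem_empty, iff_false]
  rintro ⟨hi, h0, hpv⟩
  rcases pN_cases k y hk hi with ⟨h, he⟩ | ⟨h, he⟩ | ⟨h, h', he⟩ | ⟨h, j, hj, he, _, _⟩ <;> omega

end Constr

namespace Constr

variable (k : ℕ) (y : ℕ → ℕ)

instance instNeZeroNN : NeZero (NN k y) := ⟨(NN_pos k y).ne'⟩

lemma zero_eq : (⟨0, NN_pos k y⟩ : Fin (NN k y)) = 0 := Fin.ext (by simp)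

lemma pF_zero' : pF k y 0 = 0 := by rw [← zero_eq]; exact pF_zero k y

lemma pF_lt' (hk : 1 ≤ k) : ∀ i : Fin (NN k y), i ≠ 0 → pF k y i < i := by
  intro i hi
  exact pF_lt k y hk (by rwa [zero_eq])

lemma childSet_card_eq (v : Fin (NN k y)) :
    (childSet (pF k y) v).card
      = ((Finset.range (NN k y)).filter (fun i => i ≠ 0 ∧ pN k y i = v.val)).card := by
  rw [childSet, ← card_filter_fin (NN k y) (fun i => i ≠ 0 ∧ pN k y i = v.val)]
  congr 1
  apply Finset.filter_congr
  intro i _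
  have h1 : i ≠ 0 ↔ i.val ≠ 0 := by
    constructor
    · intro h h0; exact h (Fin.ext (by simpa using h0))
    · intro h h0; exact h (by rw [h0]; simp)
  have h2 : pF k y i = v ↔ pN k y i.val = v.val := by
    rw [Fin.ext_iff]
    rfl
  rw [h1, h2]

lemma one_lt_NN : 1 < NN k y := by unfold NN; omega
lemma two_lt_NN : 2 < NN k y := by unfold NN; omega

def vone : Fin (NN k y) := ⟨1, one_lt_NN k y⟩
def vtwo : Fin (NN k y) := ⟨2, two_lt_NN k y⟩

lemma NN_ge4 (hk : 1 ≤ k) : 4 ≤ NN k y := by unfold NN; omega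

-- degrees
lemma degree_zero (hk : 1 ≤ k) :
    (parentGraph (pF k y)).degree 0 = 1 := by
  rw [parentGraph_degree_zero (pF k y) (pF_zero' k y) (pF_lt' k y hk),
    childSet_card_eq]
  have : (0 : Fin (NN k y)).val = 0 := by simp
  rw [this, filt_zero k y hk]
  rfl

lemma degree_mk (hk : 1 ≤ k) {m : ℕ} (hm : m < NN k y) (h0 : m ≠ 0) :
    (parentGraph (pF k y)).degree ⟨m, hm⟩ =
      ((Finset.range (NN k y)).filter (fun i => i ≠ 0 ∧ pN k y i = m)).card + 1 := by
  rw [parentGraph_degree_ne (pF k y) (pF_zero' k y) (pF_lt' k y hk)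
    (by intro h; exact h0 (by simpa [Fin.ext_iff] using h)),
    childSet_card_eq]

lemma degree_one (hk : 1 ≤ k) :
    (parentGraph (pF k y)).degree (vone k y) = 2 := by
  unfold vone
  rw [degree_mk k y hk _ (by omega), filt_one k y hk]
  rfl

lemma degree_two (hk : 1 ≤ k) :
    (parentGraph (pF k y)).degree (vtwo k y) = 2 := by
  unfold vtwo
  rw [degree_mk k y hk _ (by omega), filt_two k y hk]
  rfl

lemma degree_spine (hk : 1 ≤ k) (hy : ∀ j, j < k → 2 ≤ y j) {j : ℕ} (hj : j < k)
    (hm : 3 + j < NN k y) :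
    (parentGraph (pF k y)).degree ⟨3 + j, hm⟩ = y j := by
  rw [degree_mk k y hk _ (by omega), filt_spine k y hk hj]
  have hdisj : Disjoint (if j + 1 < k then ({4 + j} : Finset ℕ) else ∅)
      (Finset.Ico (3 + k + B k y j) (3 + k + B k y (j + 1))) := by
    split_ifs with h
    · rw [Finset.disjoint_singleton_left, Finset.mem_Ico]
      omega
    · simp
  rw [Finset.card_union_of_disjoint hdisj, Nat.card_Ico]
  have hcard1 : (if j + 1 < k then ({4 + j} : Finset ℕ) else ∅).card
      = if j + 1 < k then 1 else 0 := by
    split_ifs <;> simp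
  rw [hcard1, B_succ]
  have := hy j hj
  unfold c
  rcases eq_or_ne j (k - 1) with h | h
  · rw [if_pos h, if_neg (by omega)]
    omega
  · rw [if_neg h, if_pos (by omega)]
    omega

lemma degree_leaf (hk : 1 ≤ k) {m : ℕ} (hm3 : 3 + k ≤ m) (hm : m < NN k y) :
    (parentGraph (pF k y)).degree ⟨m, hm⟩ = 1 := by
  rw [degree_mk k y hk _ (by omega), filt_leaf k y hk hm3]
  rfl

lemma spine_lt (hj : 0 < k) {j : ℕ} (h : j < k) : 3 + j < NN k y := by
  unfold NN; omega

end Constr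

namespace Constr

variable (k : ℕ) (y : ℕ → ℕ)

def sgn' : Sym2 (Fin (NN k y)) → Bool := fun e => decide (e ≠ s(vone k y, vtwo k y))

def TC (hk : 1 ≤ k) : SignedTree where
  n := NN k y
  G := parentGraph (pF k y)
  adjDec := parentGraphDec _
  isTree :=
    { connected := by
        haveI : Nonempty (Fin (NN k y)) := ⟨0⟩
        exact SimpleGraph.Connected.mk (parentGraph_preconnected (pF k y) (pF_lt' k y hk))
      isAcyclic := parentGraph_isAcyclic (pF k y) (pF_zero' k y) (pF_lt' k y hk) }
  sgn := sgn' k y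

variable (hk : 1 ≤ k)

lemma TC_deg (v : Fin (NN k y)) : (TC k y hk).deg v = (parentGraph (pF k y)).degree v := rfl

lemma TC_adj : (TC k y hk).G.Adj (vone k y) (vtwo k y) := by
  refine ⟨by simp [vone, vtwo, Fin.ext_iff], Or.inr ?_⟩
  exact Fin.ext (pN_2 k y)

lemma TC_neg : (TC k y hk).sgn s(vone k y, vtwo k y) = false := by
  simp [TC, sgn']

lemma TC_uniq : ∀ e ∈ (TC k y hk).G.edgeSet, (TC k y hk).sgn e = false →
    e = s(vone k y, vtwo k y) := by
  intro e _ h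
  simpa [TC, sgn'] using h

lemma TC_sdeg_one : (TC k y hk).sdeg (vone k y) = 0 := by
  rw [SignedTree.sdeg_eq_fst (TC k y hk) (vone k y) (vtwo k y) (TC_adj k y hk)
    (TC_neg k y hk) (TC_uniq k y hk), TC_deg, degree_one k y hk]
  norm_num

lemma TC_sdeg_two : (TC k y hk).sdeg (vtwo k y) = 0 := by
  rw [SignedTree.sdeg_eq_fst (TC k y hk) (vtwo k y) (vone k y) (TC_adj k y hk).symm
    ((congrArg (TC k y hk).sgn Sym2.eq_swap).trans (TC_neg k y hk))
    (fun e he hf => (TC_uniq k y hk e he hf).trans Sym2.eq_swap),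
    TC_deg, degree_two k y hk]
  norm_num

lemma TC_sdeg_other (w : Fin (NN k y)) (h1 : w ≠ vone k y) (h2 : w ≠ vtwo k y) :
    (TC k y hk).sdeg w = ((parentGraph (pF k y)).degree w : ℤ) := by
  rw [SignedTree.sdeg_eq_of_ne (TC k y hk) (vone k y) (vtwo k y) (TC_adj k y hk)
    (TC_neg k y hk) (TC_uniq k y hk) h1 h2, TC_deg]

lemma TC_sdeg_zero : (TC k y hk).sdeg (0 : Fin (NN k y)) = 1 := by
  rw [TC_sdeg_other k y hk 0
    (Fin.ne_of_val_ne (by rw [Fin.val_zero]; exact (by omega : (0:ℕ) ≠ 1)))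
    (Fin.ne_of_val_ne (by rw [Fin.val_zero]; exact (by omega : (0:ℕ) ≠ 2))),
    degree_zero k y hk]
  rfl

lemma TC_sdeg_spine (hy : ∀ j, j < k → 2 ≤ y j) {j : ℕ} (hj : j < k) :
    (TC k y hk).sdeg ⟨3 + j, spine_lt k y hk hj⟩ = (y j : ℤ) := by
  refine (TC_sdeg_other k y hk _ (Fin.ne_of_val_ne (show 3 + j ≠ 1 by omega))
    (Fin.ne_of_val_ne (show 3 + j ≠ 2 by omega))).trans ?_
  exact congrArg (Nat.cast : ℕ → ℤ) (degree_spine k y hk hy hj _)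

lemma TC_sdeg_leaf {m : ℕ} (hm3 : 3 + k ≤ m) (hm : m < NN k y) :
    (TC k y hk).sdeg ⟨m, hm⟩ = 1 := by
  refine (TC_sdeg_other k y hk _ (Fin.ne_of_val_ne (show m ≠ 1 by omega))
    (Fin.ne_of_val_ne (show m ≠ 2 by omega))).trans ?_
  exact congrArg (Nat.cast : ℕ → ℤ) (degree_leaf k y hk hm3 hm)

lemma TC_realizes (hy : ∀ j, j < k → 2 ≤ y j) (X : Finset ℤ)
    (hval : ∀ j, j < k → ((y j : ℤ)) ∈ X)
    (hsurj : ∀ x ∈ X, ∃ j, j < k ∧ (y j : ℤ) = x) :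
    (TC k y hk).Realizes (insert 1 (insert 0 (↑X : Set ℤ))) := by
  rw [SignedTree.Realizes]
  ext z
  simp only [Set.mem_insert_iff, Set.mem_range, Finset.coe_insert, Set.mem_setOf_eq,
    Finset.mem_coe]
  constructor
  · rintro (rfl | rfl | hz)
    · exact ⟨(0 : Fin (NN k y)), TC_sdeg_zero k y hk⟩
    · exact ⟨vone k y, TC_sdeg_one k y hk⟩
    · obtain ⟨j, hj, hje⟩ := hsurj z hz
      exact ⟨⟨3 + j, spine_lt k y hk hj⟩, by rw [TC_sdeg_spine k y hk hy hj]; exact hje⟩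
  · rintro ⟨w, rfl⟩
    have hwv : w = ⟨w.val, w.isLt⟩ := by exact Fin.ext rfl
    rcases le_or_gt w.val 0 with h | h
    · left
      have : w = (0 : Fin (NN k y)) := Fin.ext (by rw [Fin.val_zero]; omega)
      rw [this, TC_sdeg_zero k y hk]
    · rcases eq_or_ne w.val 1 with h1 | h1
      · right; left
        have : w = vone k y := Fin.ext h1
        rw [this, TC_sdeg_one k y hk]
      · rcases eq_or_ne w.val 2 with h2 | h2
        · right; left
          have : w = vtwo k y := Fin.ext h2
          rw [this, TC_sdeg_two k y hk]
        · rcases lt_or_ge w.val (3 + k) with h3 | h3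
          · right; right
            have hj : w.val - 3 < k := by omega
            have : w = ⟨3 + (w.val - 3), spine_lt k y hk hj⟩ :=
              Fin.ext (show w.val = 3 + (w.val - 3) by omega)
            rw [this, TC_sdeg_spine k y hk hy hj]
            exact hval _ hj
          · left
            have : w = ⟨w.val, w.isLt⟩ := Fin.ext rfl
            rw [this, TC_sdeg_leaf k y hk h3 w.isLt]

include hk in
lemma NN_sum (hy : ∀ j, j < k → 2 ≤ y j) :
    NN k y + 2 * k = (∑ j ∈ Finset.range k, y j) + k + 4 := by
  have hL : L k y + 2 * k = (∑ j ∈ Finset.range k, y j) + 1 := by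
    unfold L B
    have h2k : 2 * k = ∑ _j ∈ Finset.range k, 2 := by
      rw [Finset.sum_const, Finset.card_range, smul_eq_mul]; ring
    rw [h2k, ← Finset.sum_add_distrib]
    have hcong : ∀ j ∈ Finset.range k, c k y j + 2 = y j + (if j = k - 1 then 1 else 0) := by
      intro j hj
      rw [Finset.mem_range] at hj
      have := hy j hj
      unfold c
      split_ifs <;> omega
    rw [Finset.sum_congr rfl hcong, Finset.sum_add_distrib]
    have hite : (∑ j ∈ Finset.range k, if j = k - 1 then 1 else 0) = 1 := by
      rw [Finset.sum_ite_eq' (Finset.range k) (k - 1) (fun _ => 1),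
        if_pos (Finset.mem_range.mpr (by omega))]
    rw [hite]
  have hNN : NN k y = 3 + k + L k y := rfl
  omega

end Constr

namespace Constr

lemma exists_realizer_pos (X : Finset ℤ) (hx : ∀ x ∈ X, 1 < x) (hk : 1 ≤ X.card) :
    ∃ T' : SignedTree, T'.Realizes (insert 1 (insert 0 (↑X : Set ℤ))) ∧
      (T'.n : ℤ) = (∑ x ∈ X, x) - X.card + 4 := by
  classical
  set k := X.card with hkdef
  set y : ℕ → ℕ := fun j =>
    if h : j < k then ((X.equivFin.symm ⟨j, h⟩ : ℤ)).toNat else 2 with hydef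
  have hy2 : ∀ j, j < k → 2 ≤ y j := by
    intro j hj
    rw [hydef]
    simp only [dif_pos hj]
    have hmem : ((X.equivFin.symm ⟨j, hj⟩ : X) : ℤ) ∈ X := (X.equivFin.symm ⟨j, hj⟩).2
    have := hx _ hmem
    omega
  have hval : ∀ j, j < k → ((y j : ℤ)) ∈ X := by
    intro j hj
    rw [hydef]
    simp only [dif_pos hj]
    have hmem : ((X.equivFin.symm ⟨j, hj⟩ : X) : ℤ) ∈ X := (X.equivFin.symm ⟨j, hj⟩).2
    have := hx _ hmem
    rw [Int.toNat_of_nonneg (by omega)]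
    exact hmem
  have hsurj : ∀ x ∈ X, ∃ j, j < k ∧ (y j : ℤ) = x := by
    intro x hxm
    refine ⟨(X.equivFin ⟨x, hxm⟩).val, (X.equivFin ⟨x, hxm⟩).isLt, ?_⟩
    rw [hydef]
    simp only [dif_pos (show (X.equivFin ⟨x, hxm⟩).val < k from (X.equivFin ⟨x, hxm⟩).isLt)]
    have : (⟨(X.equivFin ⟨x, hxm⟩).val, (X.equivFin ⟨x, hxm⟩).isLt⟩ : Fin k)
        = X.equivFin ⟨x, hxm⟩ := Fin.ext rfl
    rw [this, Equiv.symm_apply_apply]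
    have hcoe : ((⟨x, hxm⟩ : {a // a ∈ X}) : ℤ) = x := rfl
    rw [hcoe, Int.toNat_of_nonneg (by have := hx x hxm; omega)]
  have hsum : (∑ j ∈ Finset.range k, y j) = ∑ x ∈ X, Int.toNat x := by
    rw [← Fin.sum_univ_eq_sum_range]
    rw [← Finset.sum_coe_sort X (fun x => Int.toNat x)]
    refine (Fintype.sum_equiv X.equivFin _ _ ?_).symm
    intro i
    rw [hydef]
    simp only [dif_pos (show (X.equivFin i).val < k from (X.equivFin i).isLt)]
    congr 1
    have : (⟨(X.equivFin i).val, (X.equivFin i).isLt⟩ : Fin k) = X.equivFin i := Fin.ext rfl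
    rw [this, Equiv.symm_apply_apply]
  have hsumZ : ((∑ x ∈ X, Int.toNat x : ℕ) : ℤ) = ∑ x ∈ X, x := by
    push_cast
    apply Finset.sum_congr rfl
    intro x hxm
    rw [Int.toNat_of_nonneg (by have := hx x hxm; omega)]
  refine ⟨TC k y hk, TC_realizes k y hk hy2 X hval hsurj, ?_⟩
  have hTn : (TC k y hk).n = NN k y := rfl
  rw [hTn]
  have hNN := NN_sum k y hk hy2
  have hNN2 : NN k y + 2 * k = (∑ x ∈ X, Int.toNat x) + k + 4 := by
    rw [← hsum]; exact hNN
  have hz : ((NN k y : ℤ)) + 2 * (k : ℤ) = ((∑ x ∈ X, Int.toNat x : ℕ) : ℤ) + k + 4 := by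
    exact_mod_cast congrArg (Nat.cast : ℕ → ℤ) hNN2
  rw [hsumZ] at hz
  omega

-- the case X = ∅ : a signed path on 4 vertices
def p4 : Fin 4 → Fin 4 := ![0, 0, 1, 2]

lemma p4_zero : p4 0 = 0 := rfl

lemma p4_lt : ∀ i : Fin 4, i ≠ 0 → p4 i < i := by decide

def T0 : SignedTree where
  n := 4
  G := parentGraph p4
  adjDec := parentGraphDec _
  isTree :=
    { connected := by
        haveI : Nonempty (Fin 4) := ⟨0⟩
        exact SimpleGraph.Connected.mk (parentGraph_preconnected p4 p4_lt)
      isAcyclic := parentGraph_isAcyclic p4 p4_zero p4_lt }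
  sgn := fun e => decide (e ≠ s((1 : Fin 4), (2 : Fin 4)))

lemma T0_sdeg : T0.sdeg (0 : Fin 4) = 1 ∧ T0.sdeg (1 : Fin 4) = 0 ∧
    T0.sdeg (2 : Fin 4) = 0 ∧ T0.sdeg (3 : Fin 4) = 1 := by
  refine ⟨?_, ?_, ?_, ?_⟩ <;> decide

lemma T0_realizes : T0.Realizes (insert 1 (insert 0 (↑(∅ : Finset ℤ) : Set ℤ))) := by
  rw [SignedTree.Realizes]
  obtain ⟨h0, h1, h2, h3⟩ := T0_sdeg
  ext z
  simp only [Finset.coe_empty, Set.mem_insert_iff, Set.mem_empty_iff_false, or_false,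
    Set.mem_range]
  constructor
  · rintro (rfl | rfl)
    · exact ⟨(0 : Fin 4), h0⟩
    · exact ⟨(1 : Fin 4), h1⟩
  · rintro ⟨w, rfl⟩
    fin_cases w
    · exact Or.inl h0
    · exact Or.inr h1
    · exact Or.inr h2
    · exact Or.inl h3

lemma exists_realizer (X : Finset ℤ) (hx : ∀ x ∈ X, 1 < x) :
    ∃ T' : SignedTree, T'.Realizes (insert 1 (insert 0 (↑X : Set ℤ))) ∧
      (T'.n : ℤ) = (∑ x ∈ X, x) - X.card + 4 := by
  rcases Nat.eq_zero_or_pos X.card with h0 | hpos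
  · have hX : X = ∅ := Finset.card_eq_zero.mp h0
    subst hX
    exact ⟨T0, T0_realizes, by norm_num [T0]⟩
  · exact exists_realizer_pos X hx hpos

end Constr

/-- In an order-optimal signed tree realizing `D = {1, 0} ∪ X`
(`X` a set of distinct integers each greater than 1), if `uv` is the unique negative
edge, then both `u` and `v` have (unsigned) degree 2. -/
theorem stmt_14 (X : Finset ℤ) (hx : ∀ x ∈ X, 1 < x)
    (D : Set ℤ) (hD : D = insert 1 (insert 0 (↑X : Set ℤ)))
    (T : SignedTree) (hreal : T.Realizes D)
    (hopt : ∀ T' : SignedTree, T'.Realizes D → T.n ≤ T'.n)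
    (u v : Fin T.n) (hadj : T.G.Adj u v) (hneg : T.sgn s(u, v) = false)
    (huniq : ∀ e ∈ T.G.edgeSet, T.sgn e = false → e = s(u, v)) :
    T.deg u = 2 ∧ T.deg v = 2 := by
  classical
  have hu2 : T.sdeg u = (T.deg u : ℤ) - 2 := SignedTree.sdeg_eq_fst T u v hadj hneg huniq
  have hneg' : T.sgn s(v, u) = false := by rwa [Sym2.eq_swap]
  have huniq' : ∀ e ∈ T.G.edgeSet, T.sgn e = false → e = s(v, u) := fun e he hf => by
    rw [Sym2.eq_swap]; exact huniq e he hf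
  have hv2 : T.sdeg v = (T.deg v : ℤ) - 2 := SignedTree.sdeg_eq_fst T v u hadj.symm hneg' huniq'
  have hDnn : ∀ z ∈ D, 0 ≤ z := by
    rw [hD]
    rintro z (rfl | rfl | hz)
    · norm_num
    · norm_num
    · exact le_of_lt (lt_trans one_pos (hx z hz))
  have hdu0 : 0 ≤ T.sdeg u := hDnn _ (by rw [hreal]; exact ⟨u, rfl⟩)
  have hdv0 : 0 ≤ T.sdeg v := hDnn _ (by rw [hreal]; exact ⟨v, rfl⟩)
  -- the optimal order upper bound
  obtain ⟨T', hT'real, hT'n⟩ := Constr.exists_realizer X hx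
  have hle : (T.n : ℤ) ≤ (∑ x ∈ X, x) - X.card + 4 := by
    have h := hopt T' (by rw [hD]; exact hT'real)
    rw [← hT'n]
    exact_mod_cast h
  constructor
  · by_contra h
    have h3 : 3 ≤ T.deg u := by omega
    have := SignedTree.lower_bound X hx D hD T hreal u v hadj hneg huniq h3
    omega
  · by_contra h
    have h3 : 3 ≤ T.deg v := by omega
    have := SignedTree.lower_bound X hx D hD T hreal v u hadj.symm hneg' huniq' h3
    omega
end

section
/- diam({1, 0}) = 3; that is, the minimum diameter of the underlying tree over all signed trees realizing the signed degree set {1, 0} equals 3. -/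
/-! ### Auxiliary material -/

open SimpleGraph

section Aux

/-- The path graph on 4 vertices, with explicit adjacency. -/
def G4 : SimpleGraph (Fin 4) where
  Adj u v := u.val + 1 = v.val ∨ v.val + 1 = u.val
  symm := ⟨fun u v h => h.symm⟩
  loopless := ⟨fun v h => by omega⟩

instance G4.adjDecidable : DecidableRel G4.Adj :=
  fun _ _ => inferInstanceAs (Decidable (_ ∨ _))

lemma G4_eq_pathGraph : G4 = SimpleGraph.pathGraph 4 := by
  ext u v
  rw [SimpleGraph.pathGraph_adj]
  rfl

lemma G4_connected : G4.Connected := by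
  rw [G4_eq_pathGraph]; exact SimpleGraph.pathGraph_connected 3

lemma reach_invariant {V : Type*} {G : SimpleGraph V} (f : V → Bool)
    (h : ∀ a b, G.Adj a b → f a = f b) {u v : V} (hr : G.Reachable u v) :
    f u = f v := by
  obtain ⟨w⟩ := hr
  induction w with
  | nil => rfl
  | cons hadj _ ih => exact (h _ _ hadj).trans ih

lemma G4_acyclic : G4.IsAcyclic := by
  rw [SimpleGraph.isAcyclic_iff_forall_adj_isBridge]
  intro v w hvw
  rw [SimpleGraph.isBridge_iff]
  refine fun hr => ?_
  have key := reach_invariant (fun x => decide (x.val ≤ v.val ∧ x.val ≤ w.val)) ?_ hr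
  · simp only [decide_eq_decide] at key
    rcases hvw with h | h
    · have := key.mp ⟨le_refl _, by omega⟩; omega
    · have := key.mpr ⟨by omega, le_refl _⟩; omega
  · intro a b hab
    rw [SimpleGraph.deleteEdges_adj] at hab
    obtain ⟨hab1, hab2⟩ := hab
    have hne : ¬ s(a, b) = s(v, w) := by
      intro hEq
      exact hab2 (by simp [hEq])
    rw [Sym2.eq_iff] at hne
    push_neg at hne
    simp only [Fin.ext_iff] at hne
    simp only [decide_eq_decide]
    have hvw' : v.val + 1 = w.val ∨ w.val + 1 = v.val := hvw
    rcases hab1 with h1 | h1 <;> rcases hvw' with h2 | h2 <;> omega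

lemma G4_isTree : G4.IsTree := ⟨G4_connected, G4_acyclic⟩

/-- The signs on the 4-vertex path: every edge positive except `{1,2}`. -/
def sgn4 : Sym2 (Fin 4) → Bool := fun e => decide (e ≠ s((1 : Fin 4), (2 : Fin 4)))

/-- The signed path `+ - +` on 4 vertices. -/
def T0 : SignedTree := ⟨4, G4, G4.adjDecidable, G4_isTree, sgn4⟩

lemma T0_realizes : T0.Realizes ({1, 0} : Set ℤ) := by
  have h0 : T0.sdeg ⟨0, by decide⟩ = 1 := by decide
  have h1 : T0.sdeg ⟨1, by decide⟩ = 0 := by decide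
  have hall : ∀ v : Fin T0.n, T0.sdeg v = 1 ∨ T0.sdeg v = 0 := by decide
  unfold SignedTree.Realizes
  ext x
  simp only [Set.mem_insert_iff, Set.mem_singleton_iff, Set.mem_range]
  constructor
  · rintro (rfl | rfl)
    · exact ⟨_, h0⟩
    · exact ⟨_, h1⟩
  · rintro ⟨v, rfl⟩
    exact hall v

lemma G4_walk_length {u v : Fin 4} (p : G4.Walk u v) : v.val ≤ u.val + p.length := by
  induction p with
  | nil => omega
  | cons hadj q ih =>
    rw [SimpleGraph.Walk.length_cons]
    rcases hadj with h | h <;> omega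

lemma G4_ediam_ne_top : G4.ediam ≠ ⊤ := by
  obtain ⟨u, v, huv⟩ := G4.exists_edist_eq_ediam_of_finite
  rw [← huv]
  exact SimpleGraph.edist_ne_top_iff_reachable.2 (G4_connected.preconnected u v)

lemma G4_diam : G4.diam = 3 := by
  have hle : G4.diam ≤ 3 := by
    obtain ⟨u, v, huv⟩ := G4.exists_dist_eq_diam
    obtain ⟨p, hp, hl⟩ := G4_connected.exists_path_of_dist u v
    have := hp.length_lt
    simp only [Fintype.card_fin] at this
    omega
  have hge : 3 ≤ G4.diam := by
    have h1 : 3 ≤ G4.dist (0 : Fin 4) 3 := by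
      obtain ⟨p, hp, hl⟩ := G4_connected.exists_path_of_dist (0 : Fin 4) 3
      have := G4_walk_length p
      simp only [Fin.val_zero] at this
      omega
    exact le_trans h1 (SimpleGraph.dist_le_diam G4_ediam_ne_top)
  omega

/-- The positive degree of a vertex. -/
def Pc (T : SignedTree) (v : Fin T.n) : ℕ :=
  letI := T.adjDec
  ((T.G.neighborFinset v).filter fun w => T.sgn s(v, w) = true).card

/-- The negative degree of a vertex. -/
def Nc (T : SignedTree) (v : Fin T.n) : ℕ :=
  letI := T.adjDec
  ((T.G.neighborFinset v).filter fun w => T.sgn s(v, w) = false).card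

lemma sdeg_eq_Pc_sub_Nc (T : SignedTree) (v : Fin T.n) :
    T.sdeg v = (Pc T v : ℤ) - (Nc T v : ℤ) := rfl

lemma Pc_pos_elim (T : SignedTree) {v : Fin T.n} (h : 0 < Pc T v) :
    ∃ x, T.G.Adj v x ∧ T.sgn s(v, x) = true := by
  letI := T.adjDec
  obtain ⟨x, hx⟩ := Finset.card_pos.1 h
  rw [Finset.mem_filter, SimpleGraph.mem_neighborFinset] at hx
  exact ⟨x, hx.1, hx.2⟩

lemma Nc_pos_elim (T : SignedTree) {v : Fin T.n} (h : 0 < Nc T v) :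
    ∃ x, T.G.Adj v x ∧ T.sgn s(v, x) = false := by
  letI := T.adjDec
  obtain ⟨x, hx⟩ := Finset.card_pos.1 h
  rw [Finset.mem_filter, SimpleGraph.mem_neighborFinset] at hx
  exact ⟨x, hx.1, hx.2⟩

lemma Nc_pos_of (T : SignedTree) {v x : Fin T.n} (hadj : T.G.Adj v x)
    (hs : T.sgn s(v, x) = false) : 0 < Nc T v := by
  letI := T.adjDec
  exact Finset.card_pos.2 ⟨x, Finset.mem_filter.2 ⟨(SimpleGraph.mem_neighborFinset _ _ _).2 hadj, hs⟩⟩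

lemma Pc_add_Nc (T : SignedTree) (v : Fin T.n) :
    Pc T v + Nc T v = (letI := T.adjDec; (T.G.neighborFinset v).card) := by
  letI := T.adjDec
  have := Finset.card_filter_add_card_filter_not
    (s := T.G.neighborFinset v) (p := fun w => T.sgn s(v, w) = true)
  simpa [Pc, Nc, Bool.not_eq_true] using this

/-- Lower bound: any signed tree realizing `{1, 0}` has diameter at least 3. -/
lemma lower_bound (T : SignedTree) (h : T.Realizes ({1, 0} : Set ℤ)) : 3 ≤ T.G.diam := by
  letI := T.adjDec
  unfold SignedTree.Realizes at h
  have hmem : ∀ v, T.sdeg v = 1 ∨ T.sdeg v = 0 := by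
    intro v
    have : T.sdeg v ∈ ({1, 0} : Set ℤ) := h ▸ Set.mem_range_self v
    simpa using this
  have h1 : ∃ a, T.sdeg a = 1 := by
    have : (1 : ℤ) ∈ ({1, 0} : Set ℤ) := by simp
    rw [h] at this; exact this
  have h0 : ∃ b, T.sdeg b = 0 := by
    have : (0 : ℤ) ∈ ({1, 0} : Set ℤ) := by simp
    rw [h] at this; exact this
  obtain ⟨a, ha⟩ := h1
  obtain ⟨b, hb⟩ := h0
  have hab : a ≠ b := by rintro rfl; rw [ha] at hb; norm_num at hb
  have hconn : T.G.Connected := T.isTree.isConnected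
  -- b has equal positive and negative degree, both positive
  have hPNb : Pc T b = Nc T b := by
    have := sdeg_eq_Pc_sub_Nc T b; rw [hb] at this; omega
  have hNb : 0 < Nc T b := by
    -- b has at least one neighbor since the tree is connected with ≥ 2 vertices
    obtain ⟨wlk⟩ := hconn.preconnected b a
    cases wlk with
    | nil => exact absurd rfl hab.symm
    | @cons _ x _ hadj _ =>
      have hx : x ∈ T.G.neighborFinset b := (SimpleGraph.mem_neighborFinset _ _ _).2 hadj
      have hcard : 0 < (T.G.neighborFinset b).card := Finset.card_pos.2 ⟨x, hx⟩
      have hsum := Pc_add_Nc T b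
      omega
  -- negative neighbor w of b
  obtain ⟨w, hbw, hwsgn⟩ := Nc_pos_elim T hNb
  -- w has a positive neighbor x
  have hNw : 0 < Nc T w := Nc_pos_of T hbw.symm (by rwa [Sym2.eq_swap])
  have hPw : 0 < Pc T w := by
    have hs := sdeg_eq_Pc_sub_Nc T w
    rcases hmem w with h' | h' <;> rw [h'] at hs <;> omega
  obtain ⟨x, hwx, hxsgn⟩ := Pc_pos_elim T hPw
  -- b has a positive neighbor y
  have hPb : 0 < Pc T b := by omega
  obtain ⟨y, hby, hysgn⟩ := Pc_pos_elim T hPb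
  -- distinctness
  have hbw_ne : b ≠ w := hbw.ne
  have hxw : x ≠ w := hwx.ne'
  have hxb : x ≠ b := by
    rintro rfl
    rw [Sym2.eq_swap, hwsgn] at hxsgn
    exact absurd hxsgn (by simp)
  have hyb : y ≠ b := hby.ne'
  have hyw : y ≠ w := by
    rintro rfl
    rw [hwsgn] at hysgn
    exact absurd hysgn (by simp)
  have hxy : x ≠ y := by
    rintro rfl
    -- x would be adjacent to both w and b, giving two paths from b to x
    have hbx : T.G.Adj b x := hby
    have hpath2 : (SimpleGraph.Walk.cons hbw (SimpleGraph.Walk.cons hwx .nil)).IsPath := by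
      simp [SimpleGraph.Walk.isPath_def, hbw_ne, hxb.symm, hxw.symm]
    have heq := T.isTree.IsAcyclic.path_unique (SimpleGraph.Path.singleton hbx)
      ⟨SimpleGraph.Walk.cons hbw (SimpleGraph.Walk.cons hwx .nil), hpath2⟩
    have := congrArg (fun q : T.G.Path b x => q.1.length) heq
    simp [SimpleGraph.Path.singleton] at this
  -- the path x - w - b - y has length 3 and is the unique path from x to y
  let W : T.G.Walk x y :=
    .cons hwx.symm (.cons hbw.symm (.cons hby .nil))
  have hW : W.IsPath := by
    rw [SimpleGraph.Walk.isPath_def]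
    simp only [W, SimpleGraph.Walk.support_cons, SimpleGraph.Walk.support_nil]
    simp [List.nodup_cons, hxw, hxb, hxy, Ne.symm hbw_ne, Ne.symm hyw, Ne.symm hyb]
  obtain ⟨p, hp, hl⟩ := hconn.exists_path_of_dist x y
  have hpW : p = W := ExistsUnique.unique (T.isTree.existsUnique_path x y) hp hW
  have hdist : T.G.dist x y = 3 := by
    rw [← hl, hpW]; rfl
  have hediam : T.G.ediam ≠ ⊤ := by
    haveI : Nonempty (Fin T.n) := ⟨b⟩
    obtain ⟨u, v, huv⟩ := T.G.exists_edist_eq_ediam_of_finite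
    rw [← huv]
    exact SimpleGraph.edist_ne_top_iff_reachable.2 (hconn.preconnected u v)
  calc 3 = T.G.dist x y := hdist.symm
    _ ≤ T.G.diam := SimpleGraph.dist_le_diam hediam

end Aux

/-- `diam({1, 0}) = 3`. -/
theorem stmt_16 : diamOfSet ({1, 0} : Set ℤ) = 3 := by
  have h3 : 3 ∈ {k : ℕ | ∃ T : SignedTree, T.Realizes ({1, 0} : Set ℤ) ∧ T.G.diam = k} :=
    ⟨T0, T0_realizes, G4_diam⟩
  refine le_antisymm (Nat.sInf_le h3) (le_csInf ⟨3, h3⟩ ?_)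
  rintro k ⟨T, hT, rfl⟩
  exact lower_bound T hT
end

section
/- For every integer x > 1, diam({1, x}) = 2; that is, the minimum diameter of the underlying tree over all signed trees realizing the signed degree set {1, x} equals 2. -/
/-! ### Auxiliary: the star graph on `Fin (m+1)` with center `0` -/

/-- The star graph on `Fin (m+1)`, center `0`. -/
def starG (m : ℕ) : SimpleGraph (Fin (m + 1)) where
  Adj u v := u ≠ v ∧ (u = 0 ∨ v = 0)
  symm := by
    constructor
    rintro u v ⟨h1, h2⟩
    exact ⟨h1.symm, h2.symm⟩
  loopless := by constructor; rintro u ⟨h1, _⟩; exact h1 rfl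

lemma starG_adj {m : ℕ} {u v : Fin (m + 1)} :
    (starG m).Adj u v ↔ u ≠ v ∧ (u = 0 ∨ v = 0) := Iff.rfl

instance starGDec (m : ℕ) : DecidableRel (starG m).Adj :=
  fun u v => inferInstanceAs (Decidable (u ≠ v ∧ (u = 0 ∨ v = 0)))

lemma starG_not_adj_deleted {m : ℕ} (w z : Fin (m + 1)) (hw : w ≠ 0) :
    ¬ ((starG m) \ SimpleGraph.fromEdgeSet {s(w, (0 : Fin (m+1)))}).Adj w z := by
  rintro ⟨⟨hne, h0⟩, hnot⟩
  rcases h0 with h | h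
  · exact hw h
  · subst h
    exact hnot (by simp [SimpleGraph.fromEdgeSet_adj, hne])

lemma starG_connected (m : ℕ) : (starG m).Connected := by
  rw [SimpleGraph.connected_iff]
  refine ⟨fun u v => ?_, ⟨0⟩⟩
  by_cases huv : u = v
  · exact huv ▸ SimpleGraph.Reachable.refl u
  by_cases hu : u = 0
  · exact (SimpleGraph.Adj.reachable (starG_adj.mpr ⟨huv, Or.inl hu⟩))
  by_cases hv : v = 0
  · exact (SimpleGraph.Adj.reachable (starG_adj.mpr ⟨huv, Or.inr hv⟩))
  · exact (SimpleGraph.Adj.reachable (starG_adj.mpr ⟨hu, Or.inr rfl⟩)).trans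
      (SimpleGraph.Adj.reachable (starG_adj.mpr ⟨fun h => hv h.symm, Or.inl rfl⟩))

lemma starG_isTree (m : ℕ) : (starG m).IsTree := by
  refine ⟨starG_connected m, ?_⟩
  rw [SimpleGraph.isAcyclic_iff_forall_adj_isBridge]
  rintro u v ⟨huv, h0⟩
  rcases h0 with h | h
  · subst h
    rw [SimpleGraph.isBridge_iff]
    refine fun hr => ?_
    rw [show s((0 : Fin (m+1)), v) = s(v, 0) from Sym2.eq_swap] at hr
    obtain ⟨p⟩ := hr.symm
    cases p with
    | nil => exact huv rfl
    | cons h q => exact starG_not_adj_deleted _ _ (fun hh => huv hh.symm) h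
  · subst h
    rw [SimpleGraph.isBridge_iff]
    refine fun hr => ?_
    obtain ⟨p⟩ := hr
    cases p with
    | nil => exact huv rfl
    | cons h q => exact starG_not_adj_deleted _ _ huv h

lemma starG_neighborFinset_zero (m : ℕ) :
    (starG m).neighborFinset (0 : Fin (m+1)) = Finset.univ.erase 0 := by
  ext w
  simp [SimpleGraph.mem_neighborFinset, starG_adj, ne_comm, eq_comm]

lemma starG_neighborFinset_ne_zero {m : ℕ} (i : Fin (m+1)) (hi : i ≠ 0) :
    (starG m).neighborFinset i = {0} := by
  ext w
  simp only [SimpleGraph.mem_neighborFinset, starG_adj, Finset.mem_singleton]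
  constructor
  · rintro ⟨hne, h | h⟩
    · exact absurd h hi
    · exact h
  · rintro rfl
    exact ⟨hi, Or.inr rfl⟩

/-- The all-positive signed star realizing `{1, x}`. -/
noncomputable def starTree (m : ℕ) : SignedTree where
  n := m + 1
  G := starG m
  adjDec := starGDec m
  isTree := starG_isTree m
  sgn := fun _ => true

lemma starTree_sdeg_zero (m : ℕ) : (starTree m).sdeg (0 : Fin (m+1)) = m := by
  unfold SignedTree.sdeg
  simp only [starTree, Finset.filter_true_of_mem (fun _ _ => rfl)]
  erw [starG_neighborFinset_zero m]
  simp [Finset.card_erase_of_mem]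

lemma starTree_sdeg_ne_zero (m : ℕ) (i : Fin (m+1)) (hi : i ≠ 0) :
    (starTree m).sdeg i = 1 := by
  unfold SignedTree.sdeg
  simp only [starTree, Finset.filter_true_of_mem (fun _ _ => rfl)]
  erw [starG_neighborFinset_ne_zero i hi]
  simp

lemma starG_edist_le_two (m : ℕ) (u v : Fin (m+1)) : (starG m).edist u v ≤ 2 := by
  have key : ∀ w : Fin (m+1), (starG m).edist w 0 ≤ 1 := by
    intro w
    by_cases hw : w = 0
    · subst hw; simp
    · exact le_of_eq (SimpleGraph.edist_eq_one_iff_adj.mpr (starG_adj.mpr ⟨hw, Or.inr rfl⟩))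
  calc (starG m).edist u v ≤ (starG m).edist u 0 + (starG m).edist 0 v :=
        SimpleGraph.edist_triangle
    _ ≤ 1 + 1 := by
        gcongr
        · exact key u
        · rw [SimpleGraph.edist_comm]; exact key v
    _ = 2 := by norm_num

lemma starG_diam (m : ℕ) (hm : 2 ≤ m) : (starG m).diam = 2 := by
  have h1 : (1 : Fin (m+1)) = ⟨1, by omega⟩ := by
    apply Fin.ext; simp [Fin.val_one, Nat.mod_eq_of_lt (by omega : 1 < m + 1)]
  set a : Fin (m+1) := ⟨1, by omega⟩ with ha
  set b : Fin (m+1) := ⟨2, by omega⟩ with hb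
  have hab : a ≠ b := by simp [ha, hb, Fin.ext_iff]
  have ha0 : a ≠ 0 := by simp [ha, Fin.ext_iff]
  have hb0 : b ≠ 0 := by simp [hb, Fin.ext_iff]
  have hnadj : ¬ (starG m).Adj a b := by
    intro hh
    rcases (starG_adj.mp hh).2 with h | h
    · exact ha0 h
    · exact hb0 h
  have hedist : (starG m).edist a b = 2 := by
    have hle := starG_edist_le_two m a b
    have hne0 : (starG m).edist a b ≠ 0 := by
      simp [SimpleGraph.edist_eq_zero_iff, hab]
    have hne1 : (starG m).edist a b ≠ 1 := fun h =>
      hnadj (SimpleGraph.edist_eq_one_iff_adj.mp h)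
    have hneT : (starG m).edist a b ≠ ⊤ := fun h => by
      rw [h] at hle; exact absurd hle (by simp)
    lift (starG m).edist a b to ℕ using hneT with e he
    have h2 : e ≤ 2 := by exact_mod_cast hle
    have h0 : e ≠ 0 := by exact_mod_cast hne0
    have h1' : e ≠ 1 := by exact_mod_cast hne1
    have : e = 2 := by omega
    exact_mod_cast this
  have hediam : (starG m).ediam = 2 := by
    apply le_antisymm
    · exact SimpleGraph.ediam_le_of_edist_le (starG_edist_le_two m)
    · rw [← hedist]; exact SimpleGraph.edist_le_ediam
  rw [SimpleGraph.diam, hediam]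
  rfl

lemma starTree_realizes (x : ℤ) (hx : 1 < x) :
    (starTree x.toNat).Realizes ({1, x} : Set ℤ) := by
  have hm : 2 ≤ x.toNat := by omega
  have hcast : ((x.toNat : ℤ)) = x := Int.toNat_of_nonneg (by omega)
  unfold SignedTree.Realizes
  apply Set.eq_of_subset_of_subset
  · intro d hd
    rcases hd with h | h
    · rw [h]
      exact ⟨(⟨1, by omega⟩ : Fin (x.toNat+1)), starTree_sdeg_ne_zero _ _ (by simp [Fin.ext_iff])⟩
    · rw [Set.mem_singleton_iff] at h
      rw [h]
      exact ⟨(0 : Fin (x.toNat+1)), by rw [starTree_sdeg_zero, hcast]⟩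
  · rintro d ⟨v, rfl⟩
    by_cases hv : v = (0 : Fin (x.toNat + 1))
    · subst hv
      right
      rw [Set.mem_singleton_iff, starTree_sdeg_zero, hcast]
    · left
      exact starTree_sdeg_ne_zero _ v hv

/-- Any signed tree realizing `{1, x}` with `x ≥ 2` has diameter at least 2. -/
lemma two_le_diam_of_realizes (x : ℤ) (hx : 1 < x) (T : SignedTree)
    (hT : T.Realizes ({1, x} : Set ℤ)) : 2 ≤ T.G.diam := by
  letI := T.adjDec
  have hxmem : x ∈ Set.range T.sdeg := by
    rw [← hT]; exact Or.inr rfl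
  obtain ⟨v, hv⟩ := hxmem
  have hNE : Nonempty (Fin T.n) := ⟨v⟩
  -- v has at least two neighbors
  have hdeg : 1 < (T.G.neighborFinset v).card := by
    have hP : (x : ℤ) ≤ (((T.G.neighborFinset v).filter fun w => T.sgn s(v, w) = true).card : ℤ) := by
      unfold SignedTree.sdeg at hv
      have : (0 : ℤ) ≤ (((T.G.neighborFinset v).filter fun w => T.sgn s(v, w) = false).card : ℤ) := by
        positivity
      omega
    have hle : ((T.G.neighborFinset v).filter fun w => T.sgn s(v, w) = true).card
        ≤ (T.G.neighborFinset v).card := Finset.card_filter_le _ _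
    have : (2 : ℤ) ≤ ((T.G.neighborFinset v).card : ℤ) := by
      calc (2 : ℤ) ≤ x := by omega
        _ ≤ _ := hP
        _ ≤ _ := by exact_mod_cast hle
    exact_mod_cast by omega
  obtain ⟨a, ha, b, hb, hab⟩ := Finset.one_lt_card.mp hdeg
  rw [SimpleGraph.mem_neighborFinset] at ha hb
  -- a and b are not adjacent (otherwise two distinct paths from a to b)
  have hnadj : ¬ T.G.Adj a b := by
    intro hadjab
    have huniq := T.isTree.existsUnique_path a b
    obtain ⟨p, _, hp⟩ := huniq
    have h1 : (SimpleGraph.Walk.cons hadjab SimpleGraph.Walk.nil).IsPath := by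
      simp [SimpleGraph.Walk.isPath_def, hadjab.ne]
    have h2 : (SimpleGraph.Walk.cons ha.symm
        (SimpleGraph.Walk.cons hb SimpleGraph.Walk.nil)).IsPath := by
      simp [SimpleGraph.Walk.isPath_def, ha.ne', hb.ne, hab]
    have he1 := hp _ h1
    have he2 := hp _ h2
    have : (SimpleGraph.Walk.cons hadjab SimpleGraph.Walk.nil).length =
        (SimpleGraph.Walk.cons ha.symm
          (SimpleGraph.Walk.cons hb SimpleGraph.Walk.nil)).length := by
      rw [he1, he2]
    simp [SimpleGraph.Walk.length_cons] at this
  -- the distance between a and b is at least 2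
  have hconn : T.G.Connected := T.isTree.isConnected
  have hdpos : 0 < T.G.dist a b := hconn.pos_dist_of_ne hab
  have hd1 : T.G.dist a b ≠ 1 := fun h => hnadj (SimpleGraph.dist_eq_one_iff_adj.mp h)
  have hdist2 : 2 ≤ T.G.dist a b := by omega
  -- the diameter bounds the distance
  have hediam : T.G.ediam ≠ ⊤ := by
    obtain ⟨u, w, huw⟩ := SimpleGraph.exists_edist_eq_ediam_of_finite (G := T.G)
    rw [← huw]
    exact SimpleGraph.edist_ne_top_iff_reachable.mpr (hconn u w)
  calc 2 ≤ T.G.dist a b := hdist2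
    _ ≤ T.G.diam := SimpleGraph.dist_le_diam hediam

/-- For every integer `x > 1`, `diam({1, x}) = 2`. -/
theorem stmt_17 (x : ℤ) (hx : 1 < x) : diamOfSet ({1, x} : Set ℤ) = 2 := by
  have hmem : 2 ∈ {k : ℕ | ∃ T : SignedTree, T.Realizes ({1, x} : Set ℤ) ∧ T.G.diam = k} := by
    refine ⟨starTree x.toNat, starTree_realizes x hx, ?_⟩
    exact starG_diam x.toNat (by omega)
  apply le_antisymm
  · exact Nat.sInf_le hmem
  · refine le_csInf ⟨2, hmem⟩ ?_
    rintro k ⟨T, hT, rfl⟩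
    exact two_le_diam_of_realizes x hx T hT
end
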